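/- Collage theorem in a partial metric space: Let (X,p) be a complete partial metric space, L a nonempty compact subset, ε ≥ 0, and {X; w₁,…,wₙ} a partial IFS with contractivity factor 0 ≤ s < 1 whose attractor is A. If h_p(L, ⋃_{m=1}^n w_m(L)) ≤ ε, then h_p(L, A) ≤ ε/(1−s). Equivalently, h_p(L,A) ≤ (1−s)^{-1} h_p(L, ⋃_m w_m(L)) for all nonempty compact L. -/
import Mathlib


open Filter Topology Set ENNReal

/-- A partial metric on `X` (Matthews' axioms P1–P4). -/
structure PartialMetricOn (X : Type*) where
  p : X → X → ℝ
  nonneg_self : ∀ x, 0 ≤ p x x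
  self_le : ∀ x y, p x x ≤ p x y
  eq_of_indist : ∀ x y, p x x = p x y → p x y = p y y → x = y
  symm : ∀ x y, p x y = p y x
  triangle : ∀ x y z, p x z ≤ p x y + p y z - p y y

variable {X : Type*}

/-- A sequence is Cauchy if `p (a m) (a n)` converges as `m, n → ∞`. -/
def PartialMetricOn.IsCauchySeq (P : PartialMetricOn X) (a : ℕ → X) : Prop :=
  ∃ l : ℝ, Tendsto (fun mn : ℕ × ℕ => P.p (a mn.1) (a mn.2)) atTop (nhds l)

/-- Convergence in a partial metric space: `lim p (a n) x = p x x`. -/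
def PartialMetricOn.ConvergesTo (P : PartialMetricOn X) (a : ℕ → X) (x : X) : Prop :=
  Tendsto (fun n => P.p (a n) x) atTop (nhds (P.p x x))

/-- Completeness: every Cauchy sequence converges, with `lim p (a m) (a n) = p x x`. -/
def PartialMetricOn.Complete (P : PartialMetricOn X) : Prop :=
  ∀ a : ℕ → X, P.IsCauchySeq a → ∃ x, P.ConvergesTo a x ∧
    Tendsto (fun mn : ℕ × ℕ => P.p (a mn.1) (a mn.2)) atTop (nhds (P.p x x))

/-- The topology induced by a partial metric, generated by the open balls
`{y | p x y < p x x + ε}`. -/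
def PartialMetricOn.topology (P : PartialMetricOn X) : TopologicalSpace X :=
  TopologicalSpace.generateFrom {s | ∃ x ε, 0 < ε ∧ s = {y | P.p x y < P.p x x + ε}}

/-- The Lipschitz constant `Lip_p f = sup_{x ≠ y} p (f x) (f y) / p x y ∈ [0,∞]`. -/
noncomputable def PartialMetricOn.lip (P : PartialMetricOn X) (f : X → X) : ℝ≥0∞ :=
  ⨆ q : {q : X × X // q.1 ≠ q.2}, ENNReal.ofReal (P.p (f q.1.1) (f q.1.2) / P.p q.1.1 q.1.2)

/-- The diameter `diam A = sup_{x,y ∈ A} p x y ∈ [0,∞]`. -/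
noncomputable def PartialMetricOn.diam (P : PartialMetricOn X) (A : Set X) : ℝ≥0∞ :=
  ⨆ x ∈ A, ⨆ y ∈ A, ENNReal.ofReal (P.p x y)

/-- `ρ_p(A,B) = sup_{x ∈ A} inf_{y ∈ B} p x y`. -/
noncomputable def PartialMetricOn.rho (P : PartialMetricOn X) (A B : Set X) : ℝ :=
  sSup ((fun x => sInf ((fun y => P.p x y) '' B)) '' A)

/-- The Hausdorff partial metric `h_p(A,B) = max {ρ_p(A,B), ρ_p(B,A)}`. -/
noncomputable def PartialMetricOn.hp (P : PartialMetricOn X) (A B : Set X) : ℝ :=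
  max (P.rho A B) (P.rho B A)

/-- `wordComp f w m = f_{w 0} ∘⋯-style composition: the map `f_{[w]_m}`. -/
def wordComp {ι : Type*} (f : ι → X → X) (w : ℕ → ι) : ℕ → X → X
  | 0 => id
  | (m+1) => (wordComp f w m) ∘ (f (w m))


section Aux

variable {X : Type*} (P : PartialMetricOn X)

lemma PM.p_nonneg (x y : X) : 0 ≤ P.p x y :=
  le_trans (P.nonneg_self x) (P.self_le x y)

/-- inner inf notation -/
noncomputable def PM.d (x : X) (B : Set X) : ℝ := sInf ((fun y => P.p x y) '' B)

lemma PM.d_bddBelow (x : X) (B : Set X) : BddBelow ((fun y => P.p x y) '' B) :=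
  ⟨0, by rintro _ ⟨z, _, rfl⟩; exact PM.p_nonneg P x z⟩

lemma PM.d_le {B : Set X} (x : X) {y : X} (hy : y ∈ B) : PM.d P x B ≤ P.p x y :=
  csInf_le (PM.d_bddBelow P x B) ⟨y, hy, rfl⟩

lemma PM.le_d {B : Set X} {c : ℝ} {x : X} (hB : B.Nonempty)
    (h : ∀ y ∈ B, c ≤ P.p x y) : c ≤ PM.d P x B :=
  le_csInf (hB.image _) (by rintro _ ⟨y, hy, rfl⟩; exact h y hy)

lemma PM.d_nonneg {B : Set X} (x : X) (hB : B.Nonempty) : 0 ≤ PM.d P x B :=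
  PM.le_d P hB (fun y _ => PM.p_nonneg P x y)

lemma PM.rho_eq (A B : Set X) : P.rho A B = sSup ((fun x => PM.d P x B) '' A) := rfl

lemma PM.rho_nonneg (A B : Set X) (hB : B.Nonempty) : 0 ≤ P.rho A B :=
  Real.sSup_nonneg (by rintro _ ⟨x, hx, rfl⟩; exact PM.d_nonneg P x hB)

lemma PM.d_le_rho {A B : Set X} {x : X} (hx : x ∈ A) (hB : B.Nonempty)
    (hbdd : ∃ M, ∀ x ∈ A, ∀ y ∈ B, P.p x y ≤ M) : PM.d P x B ≤ P.rho A B := by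
  obtain ⟨M, hM⟩ := hbdd
  obtain ⟨y₀, hy₀⟩ := hB
  refine le_csSup ⟨M, ?_⟩ ⟨x, hx, rfl⟩
  rintro _ ⟨x', hx', rfl⟩
  exact le_trans (PM.d_le P x' hy₀) (hM x' hx' y₀ hy₀)

lemma PM.rho_le {A B : Set X} {c : ℝ} (hc : 0 ≤ c)
    (h : ∀ x ∈ A, PM.d P x B ≤ c) : P.rho A B ≤ c :=
  Real.sSup_le (by rintro _ ⟨x, hx, rfl⟩; exact h x hx) hc

lemma PM.rho_triangle {A B C : Set X} (hB : B.Nonempty) (hC : C.Nonempty)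
    (hAB : ∃ M, ∀ x ∈ A, ∀ y ∈ B, P.p x y ≤ M)
    (hBC : ∃ M, ∀ x ∈ B, ∀ y ∈ C, P.p x y ≤ M) :
    P.rho A C ≤ P.rho A B + P.rho B C := by
  refine PM.rho_le P (add_nonneg (PM.rho_nonneg P A B hB) (PM.rho_nonneg P B C hC)) ?_
  intro x hx
  have key : PM.d P x C - P.rho B C ≤ PM.d P x B := by
    refine PM.le_d P hB ?_
    intro y hy
    have h2 : PM.d P x C ≤ P.p x y + PM.d P y C := by
      have : PM.d P x C - P.p x y ≤ PM.d P y C := by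
        refine PM.le_d P hC ?_
        intro z hz
        have t := P.triangle x y z
        have hn := P.nonneg_self y
        have := PM.d_le P x hz
        linarith
      linarith
    have h3 : PM.d P y C ≤ P.rho B C := PM.d_le_rho P hy hC hBC
    linarith
  have h4 : PM.d P x B ≤ P.rho A B := PM.d_le_rho P hx hB hAB
  linarith

lemma PM.rho_contract {n : ℕ} (w : Fin n → X → X) {s : ℝ} (hs0 : 0 ≤ s)
    (hw : ∀ j x y, P.p (w j x) (w j y) ≤ s * P.p x y)
    {B C : Set X} (hB : B.Nonempty) (hC : C.Nonempty)
    (hBC : ∃ M, ∀ x ∈ B, ∀ y ∈ C, P.p x y ≤ M) :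
    P.rho (⋃ j, w j '' B) (⋃ j, w j '' C) ≤ s * P.rho B C := by
  refine PM.rho_le P (mul_nonneg hs0 (PM.rho_nonneg P B C hC)) ?_
  rintro u hu
  simp only [Set.mem_iUnion, Set.mem_image] at hu
  obtain ⟨j, x, hx, rfl⟩ := hu
  have hCne : (⋃ j, w j '' C).Nonempty := by
    obtain ⟨y₀, hy₀⟩ := id hC
    exact ⟨w j y₀, Set.mem_iUnion.2 ⟨j, ⟨y₀, hy₀, rfl⟩⟩⟩
  have key : PM.d P (w j x) (⋃ j, w j '' C) ≤ s * PM.d P x C := by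
    rcases eq_or_lt_of_le hs0 with h0 | hpos
    · obtain ⟨y₀, hy₀⟩ := id hC
      have h1 : PM.d P (w j x) (⋃ j, w j '' C) ≤ P.p (w j x) (w j y₀) :=
        PM.d_le P _ (Set.mem_iUnion.2 ⟨j, ⟨y₀, hy₀, rfl⟩⟩)
      have h2 := hw j x y₀
      have h3 := PM.d_nonneg P x hC
      rw [← h0] at h2 ⊢
      simp only [zero_mul] at h2 ⊢
      linarith
    · rw [mul_comm, ← div_le_iff₀ hpos]
      refine PM.le_d P hC ?_
      intro y hy
      rw [div_le_iff₀ hpos]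
      have h1 : PM.d P (w j x) (⋃ j, w j '' C) ≤ P.p (w j x) (w j y) :=
        PM.d_le P _ (Set.mem_iUnion.2 ⟨j, ⟨y, hy, rfl⟩⟩)
      have h2 := hw j x y
      linarith [mul_comm s (P.p x y)]
  have h5 : PM.d P x C ≤ P.rho B C := PM.d_le_rho P hx hC hBC
  have := mul_le_mul_of_nonneg_left h5 hs0
  linarith

/-- A compact set (in the partial-metric topology) is bounded. -/
lemma PM.bnd_of_compact {K : Set X} (hK : @IsCompact X P.topology K) :
    ∃ M, ∀ x ∈ K, ∀ y ∈ K, P.p x y ≤ M := by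
  letI := P.topology
  have hopen : ∀ x : X, IsOpen {y | P.p x y < P.p x x + 1} := fun x =>
    TopologicalSpace.GenerateOpen.basic _ ⟨x, 1, one_pos, rfl⟩
  have hcover : K ⊆ ⋃ x ∈ K, {y | P.p x y < P.p x x + 1} := by
    intro x hx
    exact Set.mem_biUnion hx (by simp only [Set.mem_setOf_eq]; linarith)
  obtain ⟨b', hb'sub, hb'fin, hb'cov⟩ :=
    hK.elim_finite_subcover_image (fun x _ => hopen x) hcover
  obtain ⟨C, hC⟩ := (hb'fin.image2 (fun x y => P.p x y) hb'fin).bddAbove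
  refine ⟨C + 2, ?_⟩
  intro x hx y hy
  obtain ⟨i, hi, hix⟩ := Set.mem_iUnion₂.1 (hb'cov hx)
  obtain ⟨j, hj, hjy⟩ := Set.mem_iUnion₂.1 (hb'cov hy)
  simp only [Set.mem_setOf_eq] at hix hjy
  have hCij : P.p i j ≤ C := hC (Set.mem_image2_of_mem hi hj)
  have t1 := P.triangle x i y
  have t2 := P.triangle i j y
  have sx := P.symm i x
  linarith

/-- cross-boundedness from boundedness of each set. -/
lemma PM.cross {K K' : Set X} (hKne : K.Nonempty) (hK'ne : K'.Nonempty)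
    (hK : ∃ M, ∀ x ∈ K, ∀ y ∈ K, P.p x y ≤ M)
    (hK' : ∃ M, ∀ x ∈ K', ∀ y ∈ K', P.p x y ≤ M) :
    ∃ M, ∀ x ∈ K, ∀ y ∈ K', P.p x y ≤ M := by
  obtain ⟨M1, h1⟩ := hK
  obtain ⟨M2, h2⟩ := hK'
  obtain ⟨x₀, hx₀⟩ := hKne
  obtain ⟨y₀, hy₀⟩ := hK'ne
  refine ⟨M1 + P.p x₀ y₀ + M2, ?_⟩
  intro x hx y hy
  have t1 := P.triangle x x₀ y
  have t2 := P.triangle x₀ y₀ y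
  have b1 := h1 x hx x₀ hx₀
  have b2 := h2 y₀ hy₀ y hy
  have n1 := P.nonneg_self x₀
  have n2 := P.nonneg_self y₀
  linarith

lemma PM.cross_symm {K K' : Set X}
    (h : ∃ M, ∀ x ∈ K, ∀ y ∈ K', P.p x y ≤ M) :
    ∃ M, ∀ x ∈ K', ∀ y ∈ K, P.p x y ≤ M := by
  obtain ⟨M, hM⟩ := h
  exact ⟨M, fun x hx y hy => by rw [P.symm]; exact hM y hy x hx⟩

lemma PM.bnd_image {n : ℕ} (w : Fin n → X → X) {s : ℝ} (hs0 : 0 ≤ s)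
    (hw : ∀ j x y, P.p (w j x) (w j y) ≤ s * P.p x y)
    {K : Set X} (hKne : K.Nonempty)
    (hK : ∃ M, ∀ x ∈ K, ∀ y ∈ K, P.p x y ≤ M) :
    ∃ M, ∀ x ∈ ⋃ j, w j '' K, ∀ y ∈ ⋃ j, w j '' K, P.p x y ≤ M := by
  obtain ⟨M, hM⟩ := hK
  obtain ⟨x₀, hx₀⟩ := hKne
  obtain ⟨C, hC⟩ := (Set.finite_range
    (fun q : Fin n × Fin n => P.p (w q.1 x₀) (w q.2 x₀))).bddAbove
  have hC' : ∀ j k : Fin n, P.p (w j x₀) (w k x₀) ≤ C := fun j k =>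
    hC ⟨(j, k), rfl⟩
  have hM0 : 0 ≤ M := le_trans (PM.p_nonneg P x₀ x₀) (hM x₀ hx₀ x₀ hx₀)
  refine ⟨s * M + C + s * M, ?_⟩
  rintro u hu v hv
  simp only [Set.mem_iUnion, Set.mem_image] at hu hv
  obtain ⟨j, x, hx, rfl⟩ := hu
  obtain ⟨k, y, hy, rfl⟩ := hv
  have t1 := P.triangle (w j x) (w j x₀) (w k y)
  have t2 := P.triangle (w j x₀) (w k x₀) (w k y)
  have b1 := hw j x x₀
  have b2 := hw k x₀ y
  have m1 := hM x hx x₀ hx₀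
  have m2 := hM x₀ hx₀ y hy
  have n1 := P.nonneg_self (w j x₀)
  have n2 := P.nonneg_self (w k x₀)
  have c1 := hC' j k
  nlinarith [mul_le_mul_of_nonneg_left m1 hs0, mul_le_mul_of_nonneg_left m2 hs0]

end Aux


/-- Collage theorem in a partial metric space. -/
theorem stmt17 {n : ℕ} (P : PartialMetricOn X) (hC : P.Complete)
    (w : Fin n → X → X) (s : ℝ) (hs0 : 0 ≤ s) (hs1 : s < 1)
    (hw : ∀ j x y, P.p (w j x) (w j y) ≤ s * P.p x y)
    (A : Set X) (hAne : A.Nonempty) (hAcomp : @IsCompact X P.topology A)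
    (hA : A = ⋃ j, w j '' A)
    (L : Set X) (hLne : L.Nonempty) (hLcomp : @IsCompact X P.topology L)
    (ε : ℝ) (hε : 0 ≤ ε) (hcol : P.hp L (⋃ j, w j '' L) ≤ ε) :
    P.hp L A ≤ ε / (1 - s) := by
  -- boundedness facts
  have hbL := PM.bnd_of_compact P hLcomp
  have hbA := PM.bnd_of_compact P hAcomp
  have hbWL := PM.bnd_image P w hs0 hw hLne hbL
  -- WL is nonempty (n > 0 since A is nonempty)
  have hWLne : (⋃ j, w j '' L).Nonempty := by
    obtain ⟨a, ha⟩ := hAne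
    rw [hA] at ha
    simp only [Set.mem_iUnion, Set.mem_image] at ha
    obtain ⟨j, _, _, _⟩ := ha
    obtain ⟨x₀, hx₀⟩ := hLne
    exact ⟨w j x₀, Set.mem_iUnion.2 ⟨j, ⟨x₀, hx₀, rfl⟩⟩⟩
  -- cross bounds
  have cLA := PM.cross P hLne hAne hbL hbA
  have cAL := PM.cross_symm P cLA
  have cLWL := PM.cross P hLne hWLne hbL hbWL
  have cWLA := PM.cross P hWLne hAne hbWL hbA
  have cAWL := PM.cross_symm P cWLA
  have cWLL := PM.cross_symm P cLWL
  have hs1' : (0:ℝ) < 1 - s := by linarith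
  -- collage bounds from hypothesis
  have hLWL : P.rho L (⋃ j, w j '' L) ≤ ε := le_trans (le_max_left _ _) hcol
  have hWLL : P.rho (⋃ j, w j '' L) L ≤ ε := le_trans (le_max_right _ _) hcol
  -- contraction steps
  have con1 : P.rho (⋃ j, w j '' L) A ≤ s * P.rho L A := by
    have h := PM.rho_contract P w hs0 hw hLne hAne cLA
    calc P.rho (⋃ j, w j '' L) A = P.rho (⋃ j, w j '' L) (⋃ j, w j '' A) := by
          conv_lhs => rw [hA]
      _ ≤ s * P.rho L A := h
  have con2 : P.rho A (⋃ j, w j '' L) ≤ s * P.rho A L := by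
    have h := PM.rho_contract P w hs0 hw hAne hLne cAL
    calc P.rho A (⋃ j, w j '' L) = P.rho (⋃ j, w j '' A) (⋃ j, w j '' L) := by
          conv_lhs => rw [hA]
      _ ≤ s * P.rho A L := h
  -- triangle steps
  have tri1 : P.rho L A ≤ P.rho L (⋃ j, w j '' L) + P.rho (⋃ j, w j '' L) A :=
    PM.rho_triangle P hWLne hAne cLWL cWLA
  have tri2 : P.rho A L ≤ P.rho A (⋃ j, w j '' L) + P.rho (⋃ j, w j '' L) L :=
    PM.rho_triangle P hWLne hLne cAWL cWLL
  -- solve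
  have d1 : P.rho L A ≤ ε / (1 - s) := by
    rw [le_div_iff₀ hs1']
    nlinarith
  have d2 : P.rho A L ≤ ε / (1 - s) := by
    rw [le_div_iff₀ hs1']
    nlinarith
  exact max_le d1 d2
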